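/- Let s > 0, m_k ≥ 0, and set t₀ := (s − m_k²)²/(4s) and u(t) := s + m_k² − 2√s·√(t + m_k²) for t ≥ 0. Then t₀ ≥ 0 and u(t₀) = 0. Moreover, for any c ≥ 0 with c ≤ 2(s + m_k²) one has t₀ ≥ λ(s, m_k², c)/(4s); in particular, taking c = (m_i − m_j)², the zero locus u = 0 of the uncut propagator lies inside the integration domain t ≥ λ(s, m_k², (m_i−m_j)²)/(4s) of the contribution J^{ij;1}_k, so its integrand has a pole in the domain of integration, producing the new variation of the 3-edge banana amplitude on non-principal sheets. -/

import Mathlib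

/-- The Källén function λ(a,b,c) := a² + b² + c² − 2(ab + bc + ca). -/
noncomputable def kallen (a b c : ℝ) : ℝ := a ^ 2 + b ^ 2 + c ^ 2 - 2 * (a * b + b * c + c * a)

/-- For `s > 0`, `m_k ≥ 0`, `t₀ := (s − m_k²)²/(4s)` and `u(t) := s + m_k² − 2√s·√(t + m_k²)`:
one has `t₀ ≥ 0` and `u(t₀) = 0`; moreover for any `c ≥ 0` with `c ≤ 2(s + m_k²)` one has
`t₀ ≥ λ(s, m_k², c)/(4s)`. In particular (taking `c = (m_i − m_j)²`) the zero locus `u = 0`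
of the uncut propagator lies inside the integration domain
`t ≥ λ(s, m_k², (m_i−m_j)²)/(4s)` of the contribution `J^{ij;1}_k`, so its integrand has a
pole in the domain of integration, producing the new variation of the 3-edge banana
amplitude on non-principal sheets. -/
theorem banana_J1_pole_in_domain (s m_k : ℝ) (hs : 0 < s) (hk : 0 ≤ m_k) :
    0 ≤ (s - m_k ^ 2) ^ 2 / (4 * s) ∧
    s + m_k ^ 2 -
        2 * Real.sqrt s * Real.sqrt ((s - m_k ^ 2) ^ 2 / (4 * s) + m_k ^ 2) = 0 ∧
    ∀ c : ℝ, 0 ≤ c → c ≤ 2 * (s + m_k ^ 2) →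
      kallen s (m_k ^ 2) c / (4 * s) ≤ (s - m_k ^ 2) ^ 2 / (4 * s) := by
  have hsm : 0 ≤ s + m_k ^ 2 := by positivity
  refine ⟨by positivity, ?_, ?_⟩
  · have h1 : (s - m_k ^ 2) ^ 2 / (4 * s) + m_k ^ 2 = ((s + m_k ^ 2) / (2 * Real.sqrt s)) ^ 2 := by
      rw [div_pow, mul_pow, Real.sq_sqrt hs.le]
      field_simp
      ring
    rw [h1, Real.sqrt_sq (by positivity)]
    have hss : Real.sqrt s ≠ 0 := by positivity
    field_simp
    ring
  · intro c hc hle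
    apply div_le_div_of_nonneg_right _ (by positivity)
    have : kallen s (m_k ^ 2) c = (s - m_k ^ 2) ^ 2 + c * (c - 2 * (s + m_k ^ 2)) := by
      unfold kallen; ring
    nlinarith [mul_nonneg hc (sub_nonneg.mpr hle)]
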